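/- Let G be an étale groupoid and X a basic right G-space such that X ×_{p,X/G,p} X is closed in X × X. Then the map F : X ×_{s,G⁰,r} G → X × X, (x,g) ↦ (x·g, x), is proper. -/
import Mathlib


open Topology

/-- An étale topological groupoid, given by its arrow space `A` and object space `O`. -/
structure EtaleGroupoid (A O : Type) [TopologicalSpace A] [TopologicalSpace O] where
  r : A → O
  s : A → O
  unit : O → A
  mul : A → A → A
  inv : A → A
  r_unit : ∀ o, r (unit o) = o
  s_unit : ∀ o, s (unit o) = o
  r_mul : ∀ g h, s g = r h → r (mul g h) = r g
  s_mul : ∀ g h, s g = r h → s (mul g h) = s h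
  mul_assoc : ∀ g h k, s g = r h → s h = r k → mul (mul g h) k = mul g (mul h k)
  unit_mul : ∀ g, mul (unit (r g)) g = g
  mul_unit : ∀ g, mul g (unit (s g)) = g
  r_inv : ∀ g, r (inv g) = s g
  s_inv : ∀ g, s (inv g) = r g
  mul_inv : ∀ g, mul g (inv g) = unit (r g)
  inv_mul : ∀ g, mul (inv g) g = unit (s g)
  etale_r : IsLocalHomeomorph r
  etale_s : IsLocalHomeomorph s
  continuous_mul : Continuous fun p : { p : A × A // s p.1 = r p.2 } => mul p.1.1 p.1.2
  continuous_inv : Continuous inv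

variable {A O : Type} [TopologicalSpace A] [TopologicalSpace O]

/-- A right action of an étale groupoid on a topological space `X`. -/
structure RightAction (G : EtaleGroupoid A O) (X : Type) [TopologicalSpace X] where
  anchor : X → O
  act : X → A → X
  continuous_anchor : Continuous anchor
  continuous_act :
    Continuous fun p : { p : X × A // anchor p.1 = G.r p.2 } => act p.1.1 p.1.2
  anchor_act : ∀ x g, anchor x = G.r g → anchor (act x g) = G.s g
  act_mul : ∀ x g h, anchor x = G.r g → G.s g = G.r h →
    act (act x g) h = act x (G.mul g h)
  act_unit : ∀ x, act x (G.unit (anchor x)) = x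

/-- A left action of an étale groupoid on a topological space `X`. -/
structure LeftAction (G : EtaleGroupoid A O) (X : Type) [TopologicalSpace X] where
  anchor : X → O
  act : A → X → X
  continuous_anchor : Continuous anchor
  continuous_act :
    Continuous fun p : { p : A × X // G.s p.1 = anchor p.2 } => act p.1.1 p.1.2
  anchor_act : ∀ g x, G.s g = anchor x → anchor (act g x) = G.r g
  mul_act : ∀ g h x, G.s g = G.r h → G.s h = anchor x →
    act g (act h x) = act (G.mul g h) x
  unit_act : ∀ x, act (G.unit (anchor x)) x = x

namespace RightAction

variable {G : EtaleGroupoid A O} {X : Type} [TopologicalSpace X]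

/-- The map `(x, g) ↦ (x·g, x)` on the fibre product `X ×_{s,G⁰,r} G`. -/
def pairMap (ρ : RightAction G X) :
    { p : X × A // ρ.anchor p.1 = G.r p.2 } → X × X :=
  fun p => (ρ.act p.1.1 p.1.2, p.1.1)

/-- The action is *basic* if `pairMap` is a homeomorphism onto its image. -/
def IsBasic (ρ : RightAction G X) : Prop := Topology.IsEmbedding ρ.pairMap

/-- The action is *free* if `pairMap` is injective. -/
def IsFree (ρ : RightAction G X) : Prop := Function.Injective ρ.pairMap

/-- The action is *proper* if `pairMap` is a proper map. -/
def IsProper (ρ : RightAction G X) : Prop := IsProperMap ρ.pairMap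

/-- Two points are orbit equivalent if one is a translate of the other. -/
def OrbitRel (ρ : RightAction G X) (x y : X) : Prop :=
  ∃ g, ρ.anchor x = G.r g ∧ y = ρ.act x g

/-- The orbit space `X/G`, with the quotient topology. -/
def OrbitSpace (ρ : RightAction G X) : Type := Quot ρ.OrbitRel

instance (ρ : RightAction G X) : TopologicalSpace ρ.OrbitSpace :=
  instTopologicalSpaceQuot

/-- The orbit space projection `p : X → X/G`. -/
def orbitMap (ρ : RightAction G X) : X → ρ.OrbitSpace := Quot.mk _

end RightAction

variable {AH OH : Type} [TopologicalSpace AH] [TopologicalSpace OH]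

/-- A groupoid correspondence `X : H ← G`: commuting left `H`- and right `G`-actions
such that the right anchor map is a local homeomorphism and the right action is free
and proper. -/
structure Correspondence (H : EtaleGroupoid AH OH) (G : EtaleGroupoid A O)
    (X : Type) [TopologicalSpace X] where
  left : LeftAction H X
  right : RightAction G X
  sInv_left : ∀ h x, H.s h = left.anchor x →
    right.anchor (left.act h x) = right.anchor x
  rInv_right : ∀ x g, right.anchor x = G.r g →
    left.anchor (right.act x g) = left.anchor x
  comm : ∀ h x g, H.s h = left.anchor x → right.anchor x = G.r g →
    left.act h (right.act x g) = right.act (left.act h x) g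
  etale_s : IsLocalHomeomorph right.anchor
  free : right.IsFree
  proper : right.IsProper

namespace Correspondence

variable {H : EtaleGroupoid AH OH} {G : EtaleGroupoid A O}
  {X : Type} [TopologicalSpace X]

/-- The map `r_* : X/G → H⁰` induced by the left anchor map. -/
def rStar (C : Correspondence H G X) : C.right.OrbitSpace → OH :=
  Quot.lift C.left.anchor (by
    rintro x y ⟨g, hg, rfl⟩
    exact (C.rInv_right x g hg).symm)

end Correspondence
/-- For a basic right action of an étale groupoid `G` on a space `X` such that
`X ×_{p,X/G,p} X` is closed in `X × X`, the map
`F : X ×_{s,G⁰,r} G → X × X`, `(x,g) ↦ (x·g, x)`, is proper. -/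
theorem basic_closed_pairMap_isProperMap
    {A O : Type} [TopologicalSpace A] [TopologicalSpace O]
    {G : EtaleGroupoid A O} {X : Type} [TopologicalSpace X]
    (ρ : RightAction G X) (hbasic : ρ.IsBasic)
    (hclosed : IsClosed { q : X × X | ρ.orbitMap q.1 = ρ.orbitMap q.2 }) :
    IsProperMap ρ.pairMap := by
  have hequiv : Equivalence ρ.OrbitRel := by
    constructor
    · intro x
      exact ⟨G.unit (ρ.anchor x), (G.r_unit _).symm, (ρ.act_unit x).symm⟩
    · rintro x y ⟨g, hg, rfl⟩
      refine ⟨G.inv g, ?_, ?_⟩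
      · rw [ρ.anchor_act x g hg, G.r_inv]
      · rw [ρ.act_mul x g (G.inv g) hg (G.r_inv g).symm, G.mul_inv, ← hg, ρ.act_unit]
    · rintro x y z ⟨g, hg, rfl⟩ ⟨h, hh, rfl⟩
      have hsg : G.s g = G.r h := by rw [← ρ.anchor_act x g hg]; exact hh
      exact ⟨G.mul g h, by rw [G.r_mul g h hsg]; exact hg,
        ρ.act_mul x g h hg hsg⟩
  have hrange : Set.range ρ.pairMap
      = { q : X × X | ρ.orbitMap q.1 = ρ.orbitMap q.2 } := by
    ext q
    constructor
    · rintro ⟨⟨⟨x, g⟩, hg⟩, rfl⟩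
      exact (Quot.sound ⟨g, hg, rfl⟩).symm
    · intro hq
      have : ρ.OrbitRel q.2 q.1 := by
        have := Quot.eqvGen_exact hq.symm
        rwa [Equivalence.eqvGen_iff hequiv] at this
      obtain ⟨g, hg, hy⟩ := this
      exact ⟨⟨(q.2, g), hg⟩, by simp [RightAction.pairMap, ← hy]⟩
  have hce : Topology.IsClosedEmbedding ρ.pairMap :=
    ⟨hbasic, hrange ▸ hclosed⟩
  exact hce.isProperMap
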